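/- The constraint graph C_G of a path pair graph is bipartite; equivalently, every cycle in C_G has even length. -/

import Mathlib

open Finset

variable {m : ℕ}

/-- First endpoint of the `e`-th edge of the Hamiltonian path induced by `π`. -/
def pFst (π : Equiv.Perm (Fin (m+1))) (e : Fin m) : Fin (m+1) := π e.castSucc

/-- Second endpoint of the `e`-th edge of the Hamiltonian path induced by `π`. -/
def pSnd (π : Equiv.Perm (Fin (m+1))) (e : Fin m) : Fin (m+1) := π e.succ

/-- Position of vertex `v` along the Hamiltonian path induced by `π`. -/
def pos (π : Equiv.Perm (Fin (m+1))) (v : Fin (m+1)) : ℕ := (π.symm v : ℕ)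

/-- Edges `e` and `f = e+1` of `P_x` form a switch pair: both `P_x`-neighbours of the
middle internal vertex `πx e.succ` lie on the same side of it in `π_y`. -/
def SwitchPairX (πx πy : Equiv.Perm (Fin (m+1))) (e f : Fin m) : Prop :=
  (e : ℕ) + 1 = (f : ℕ) ∧
    ((pos πy (pFst πx e) < pos πy (pSnd πx e) ∧ pos πy (pSnd πx f) < pos πy (pSnd πx e)) ∨
     (pos πy (pSnd πx e) < pos πy (pFst πx e) ∧ pos πy (pSnd πx e) < pos πy (pSnd πx f)))

/-- Switch pairs of `P_y`: the same with the roles of the permutations swapped. -/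
def SwitchPairY (πx πy : Equiv.Perm (Fin (m+1))) (e f : Fin m) : Prop :=
  SwitchPairX πy πx e f

/-- The `P_x`-edge `e` and the `P_y`-edge `f` have the same (unordered) pair of endpoints. -/
def SharedEdge (πx πy : Equiv.Perm (Fin (m+1))) (e f : Fin m) : Prop :=
  (pFst πx e = pFst πy f ∧ pSnd πx e = pSnd πy f) ∨
  (pFst πx e = pSnd πy f ∧ pSnd πx e = pFst πy f)

/-- Alignment of the `P_x`-edge `e`: positive (`True`) iff its endpoints appear in the
same relative order in `π_x` and `π_y`. -/
def AlignX (πx πy : Equiv.Perm (Fin (m+1))) (e : Fin m) : Prop :=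
  pos πy (pFst πx e) < pos πy (pSnd πx e)

/-- Alignment of the `P_y`-edge `e`. -/
def AlignY (πx πy : Equiv.Perm (Fin (m+1))) (e : Fin m) : Prop :=
  pos πx (pFst πy e) < pos πx (pSnd πy e)

/-- The constraint graph `C_G` on the disjoint union `V_X ⊕ V_Y` of the edges of the
two paths: switch pairs inside each part, and a matching edge for each shared edge. -/
def CG (πx πy : Equiv.Perm (Fin (m+1))) : SimpleGraph (Fin m ⊕ Fin m) where
  Adj a b :=
    match a, b with
    | .inl e, .inl f => SwitchPairX πx πy e f ∨ SwitchPairX πx πy f e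
    | .inr e, .inr f => SwitchPairY πx πy e f ∨ SwitchPairY πx πy f e
    | .inl e, .inr f => SharedEdge πx πy e f
    | .inr f, .inl e => SharedEdge πx πy e f
  symm := ⟨by rintro (e|e) (f|f) h <;> simp only at h ⊢ <;> tauto⟩
  loopless := ⟨by
    rintro (e|e) (⟨h, -⟩ | ⟨h, -⟩) <;> omega⟩


lemma switchX_flip {πx πy : Equiv.Perm (Fin (m+1))} {e f : Fin m}
    (h : SwitchPairX πx πy e f) : AlignX πx πy e ↔ ¬ AlignX πx πy f := by
  obtain ⟨h1, h2⟩ := h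
  have hef : pFst πx f = pSnd πx e := by
    unfold pFst pSnd
    congr 1
    ext
    simp [h1.symm]
  unfold AlignX at *
  rw [hef]
  omega

lemma shared_align {πx πy : Equiv.Perm (Fin (m+1))} {e f : Fin m}
    (h : SharedEdge πx πy e f) : AlignX πx πy e ↔ AlignY πx πy f := by
  have hx1 : pos πx (pFst πx e) = (e : ℕ) := by simp [pos, pFst]
  have hx2 : pos πx (pSnd πx e) = (e : ℕ) + 1 := by simp [pos, pSnd]
  have hy1 : pos πy (pFst πy f) = (f : ℕ) := by simp [pos, pFst]
  have hy2 : pos πy (pSnd πy f) = (f : ℕ) + 1 := by simp [pos, pSnd]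
  unfold AlignX AlignY
  rcases h with ⟨ha, hb⟩ | ⟨ha, hb⟩
  · rw [ha, hb, hy1, hy2, ← ha, ← hb, hx1, hx2]; omega
  · rw [ha, hb, hy1, hy2, ← hb, ← ha, hx1, hx2]; omega

instance {πx πy : Equiv.Perm (Fin (m+1))} {e : Fin m} : Decidable (AlignX πx πy e) :=
  inferInstanceAs (Decidable (_ < _))

instance {πx πy : Equiv.Perm (Fin (m+1))} {e : Fin m} : Decidable (AlignY πx πy e) :=
  inferInstanceAs (Decidable (_ < _))

/-- The 2-coloring of the constraint graph by alignment. -/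
def col (πx πy : Equiv.Perm (Fin (m+1))) : Fin m ⊕ Fin m → Bool
  | .inl e => decide (AlignX πx πy e)
  | .inr f => ! decide (AlignY πx πy f)

lemma col_ne_of_adj {πx πy : Equiv.Perm (Fin (m+1))} {a b : Fin m ⊕ Fin m}
    (h : (CG πx πy).Adj a b) : col πx πy a ≠ col πx πy b := by
  rcases a with e | e <;> rcases b with f | f
  · rcases h with h | h
    · have := switchX_flip h
      simp only [col]
      by_cases hA : AlignX πx πy e <;> by_cases hB : AlignX πx πy f <;> simp_all
    · have := switchX_flip h
      simp only [col]
      by_cases hA : AlignX πx πy e <;> by_cases hB : AlignX πx πy f <;> simp_all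
  · have := shared_align h
    simp only [col]
    by_cases hA : AlignX πx πy e <;> simp_all [AlignY] <;> exact decide_eq_false (by omega)
  · have := shared_align h
    simp only [col]
    by_cases hA : AlignX πx πy f <;> simp_all [AlignY] <;> exact decide_eq_false (by omega)
  · rcases h with h | h <;> have := switchX_flip h <;>
      simp only [col, SwitchPairY] at * <;>
      by_cases hA : AlignX πy πx e <;> by_cases hB : AlignX πy πx f <;>
      simp_all [AlignY, AlignX] <;> grind

lemma walk_parity {πx πy : Equiv.Perm (Fin (m+1))} {u v : Fin m ⊕ Fin m}
    (p : (CG πx πy).Walk u v) : (col πx πy u = col πx πy v) ↔ Even p.length := by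
  induction p with
  | nil => simp
  | @cons u w v h q ih =>
    have hne := col_ne_of_adj h
    rw [SimpleGraph.Walk.length_cons, Nat.even_add_one, ← ih]
    rcases Bool.eq_false_or_eq_true (col πx πy u) with h1 | h1 <;>
      rcases Bool.eq_false_or_eq_true (col πx πy w) with h2 | h2 <;>
      rcases Bool.eq_false_or_eq_true (col πx πy v) with h3 | h3 <;> simp_all

/-- the constraint graph `C_G` of a path pair graph is bipartite
(2-colorable); equivalently, every cycle in `C_G` has even length. -/
theorem constraintGraph_bipartite {m : ℕ} (πx πy : Equiv.Perm (Fin (m+1))) :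
    (CG πx πy).Colorable 2 ∧
      ∀ (v : Fin m ⊕ Fin m) (c : (CG πx πy).Walk v v), c.IsCycle → Even c.length := by
  constructor
  · have hc : (CG πx πy).Coloring Bool :=
      SimpleGraph.Coloring.mk (col πx πy) fun h => col_ne_of_adj h
    simpa using hc.colorable
  · intro v c _
    exact (walk_parity c).mp rfl
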